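/- Let G be a 1-walk regular graph on n vertices with adjacency matrix A. Let M, N be nonzero positive semidefinite matrices with M ∘ A ≤ 0 (entrywise), N ∘ (J − I − A) = 0, and N ∘ A ≥ 0 (entrywise). Then n ≥ (tr JM)(tr JN)/((tr M)(tr N)). -/

import Mathlib

open Matrix Polynomial
open scoped ComplexOrder

section Helpers

variable {m : Type*} [Fintype m] [DecidableEq m]

lemma trace_mul_apply' (X Y : Matrix m m ℂ) :
    Matrix.trace (X * Y) = ∑ i, ∑ j, X i j * Y j i := by
  simp [Matrix.trace, Matrix.mul_apply, Matrix.diag]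

lemma psd_diag_nonneg {P : Matrix m m ℂ} (hP : P.PosSemidef) (i : m) : 0 ≤ P i i := by
  exact hP.diag_nonneg

lemma psd_trace_nonneg {P : Matrix m m ℂ} (hP : P.PosSemidef) : 0 ≤ Matrix.trace P :=
  Finset.sum_nonneg fun i _ => psd_diag_nonneg hP i

lemma psd_trace_mul_nonneg {X Y : Matrix m m ℂ} (hX : X.PosSemidef) (hY : Y.PosSemidef) :
    0 ≤ Matrix.trace (X * Y) := by
  have hH := hX.hadamard hY.transpose
  have := hH.dotProduct_mulVec_nonneg (fun _ => 1)
  convert this using 1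
  simp [dotProduct, Matrix.mulVec, Matrix.trace, Matrix.mul_apply, Matrix.hadamard_apply]

lemma psd_trace_pos {P : Matrix m m ℂ} (hP : P.PosSemidef) (hPnz : P ≠ 0) :
    0 < Matrix.trace P := by
  rcases lt_or_eq_of_le (psd_trace_nonneg hP) with h | h
  · exact h
  exfalso
  apply hPnz
  exact hP.trace_eq_zero_iff.mp h.symm

noncomputable def conjAlgHom (U : Matrix.unitaryGroup m ℂ) :
    Matrix m m ℂ →ₐ[ℂ] Matrix m m ℂ where
  toFun X := (U : Matrix m m ℂ) * X * star (U : Matrix m m ℂ)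
  map_one' := by simpa using Unitary.coe_mul_star_self U
  map_mul' X Y := by
    have h : star (U : Matrix m m ℂ) * (U : Matrix m m ℂ) = 1 := Unitary.coe_star_mul_self U
    simp only [Matrix.mul_assoc]
    rw [← Matrix.mul_assoc (star (U : Matrix m m ℂ)) (U : Matrix m m ℂ), h, Matrix.one_mul]
  map_zero' := by simp
  map_add' X Y := by noncomm_ring
  commutes' c := by
    simp [Algebra.algebraMap_eq_smul_one, Matrix.mul_smul, Matrix.smul_mul,
      Unitary.coe_mul_star_self U]

lemma aeval_diagonal' (v : m → ℂ) (p : ℂ[X]) :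
    Polynomial.aeval (Matrix.diagonal v) p = Matrix.diagonal (fun i => p.eval (v i)) := by
  have h1 : Polynomial.aeval ((Matrix.diagonalAlgHom ℂ : (m → ℂ) →ₐ[ℂ] Matrix m m ℂ) v) p
      = (Matrix.diagonalAlgHom ℂ : (m → ℂ) →ₐ[ℂ] Matrix m m ℂ) (Polynomial.aeval v p) :=
    Polynomial.aeval_algHom_apply _ _ _
  have h2 : ∀ i, (Polynomial.aeval v p) i = p.eval (v i) := by
    intro i
    have := Polynomial.aeval_algHom_apply (Pi.evalAlgHom ℂ (fun _ : m => ℂ) i) v p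
    simp only [Pi.evalAlgHom_apply] at this
    rw [← this, Polynomial.coe_aeval_eq_eval]
  rw [funext h2] at h1; exact h1

lemma aeval_conjU (U : Matrix.unitaryGroup m ℂ) (D : Matrix m m ℂ) (p : ℂ[X]) :
    Polynomial.aeval ((U : Matrix m m ℂ) * D * star (U : Matrix m m ℂ)) p
      = (U : Matrix m m ℂ) * Polynomial.aeval D p * star (U : Matrix m m ℂ) :=
  Polynomial.aeval_algHom_apply (conjAlgHom U) D p

lemma trace_unitary_conj (U : Matrix.unitaryGroup m ℂ) (X : Matrix m m ℂ) :
    Matrix.trace ((U : Matrix m m ℂ) * X * star (U : Matrix m m ℂ)) = Matrix.trace X := by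
  rw [Matrix.trace_mul_cycle, Unitary.coe_star_mul_self U, Matrix.one_mul]

/-- Existence of the (scaled) projection onto the minimal eigenspace, as a polynomial in `A`. -/
lemma exists_min_eigen_proj [Nonempty m] {A : Matrix m m ℂ} (hA : A.IsHermitian) :
    ∃ (τ : ℝ) (F : Matrix m m ℂ) (p : ℂ[X]),
      F = Polynomial.aeval A p ∧ F.PosSemidef ∧ A * F = (τ : ℂ) • F ∧
        0 < Matrix.trace F ∧ (A - (τ : ℂ) • 1).PosSemidef ∧
        (Matrix.trace A = 0 → A ≠ 0 → τ < 0) := by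
  obtain ⟨i₀, -, hmin⟩ := Finset.exists_min_image Finset.univ hA.eigenvalues
    ⟨Classical.arbitrary m, Finset.mem_univ _⟩
  set lam : m → ℝ := hA.eigenvalues with hlam
  set τ : ℝ := lam i₀ with hτ
  set S : Finset ℝ := (Finset.univ.image lam).erase τ with hS
  set pr : m → ℝ := fun i => ∏ μ ∈ S, (lam i - μ) ^ 2 with hpr
  set p : ℂ[X] := ∏ μ ∈ S, (X - C (μ : ℂ)) ^ 2 with hp
  set U := hA.eigenvectorUnitary with hU
  have hprnn : ∀ i, 0 ≤ pr i := fun i => Finset.prod_nonneg fun μ _ => sq_nonneg _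
  have hprz : ∀ i, lam i ≠ τ → pr i = 0 := by
    intro i hi
    exact Finset.prod_eq_zero (Finset.mem_erase.mpr
      ⟨hi, Finset.mem_image_of_mem _ (Finset.mem_univ i)⟩) (by simp)
  have hpri₀ : 0 < pr i₀ := by
    refine Finset.prod_pos fun μ hμ => ?_
    have : τ - μ ≠ 0 := sub_ne_zero.mpr (Ne.symm (Finset.ne_of_mem_erase hμ))
    positivity
  have hev : ∀ i, p.eval ((lam i : ℝ) : ℂ) = ((pr i : ℝ) : ℂ) := by
    intro i
    simp only [hp, hpr, Polynomial.eval_prod, Polynomial.eval_pow, Polynomial.eval_sub,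
      Polynomial.eval_X, Polynomial.eval_C]
    push_cast
    rfl
  have hspec : A = (U : Matrix m m ℂ) * Matrix.diagonal (fun i => ((lam i : ℝ) : ℂ)) *
      star (U : Matrix m m ℂ) := by
    convert hA.spectral_theorem using 3
    simp only [Unitary.conjStarAlgAut_apply]; rfl
  set F : Matrix m m ℂ := (U : Matrix m m ℂ) * Matrix.diagonal (fun i => ((pr i : ℝ) : ℂ)) *
      star (U : Matrix m m ℂ) with hF
  refine ⟨τ, F, p, ?_, ?_, ?_, ?_, ?_, ?_⟩
  · rw [hspec, aeval_conjU, aeval_diagonal', hF]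
    have h3 : (fun i => ((pr i : ℝ) : ℂ)) = fun i => p.eval (((lam i : ℝ)) : ℂ) :=
      funext fun i => (hev i).symm
    rw [h3]
  · rw [hF, Matrix.star_eq_conjTranspose]
    exact (Matrix.PosSemidef.diagonal fun i =>
      Complex.zero_le_real.mpr (hprnn i)).mul_mul_conjTranspose_same _
  · have hDD : (Matrix.diagonal fun i => ((lam i : ℝ) : ℂ)) *
        (Matrix.diagonal fun i => ((pr i : ℝ) : ℂ))
        = (τ : ℂ) • Matrix.diagonal (fun i => ((pr i : ℝ) : ℂ)) := by
      rw [Matrix.diagonal_mul_diagonal]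
      ext i j
      by_cases h : i = j
      · subst h
        by_cases h2 : lam i = τ
        · simp [Matrix.diagonal_apply, h2]
        · simp [Matrix.diagonal_apply, hprz i h2]
      · simp [Matrix.diagonal_apply, h]
    calc A * F = (U : Matrix m m ℂ) * ((Matrix.diagonal fun i => ((lam i : ℝ) : ℂ)) *
          (Matrix.diagonal fun i => ((pr i : ℝ) : ℂ))) * star (U : Matrix m m ℂ) := by
          rw [hspec, hF]
          have h1 : star (U : Matrix m m ℂ) * (U : Matrix m m ℂ) = 1 :=
            Unitary.coe_star_mul_self U
          simp only [Matrix.mul_assoc]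
          rw [← Matrix.mul_assoc (star (U : Matrix m m ℂ)) (U : Matrix m m ℂ), h1, Matrix.one_mul]
      _ = (τ : ℂ) • F := by rw [hDD, hF]; simp [Matrix.mul_smul, Matrix.smul_mul]
  · have ht : Matrix.trace F = ((∑ i, pr i : ℝ) : ℂ) := by
      rw [hF, trace_unitary_conj, Matrix.trace_diagonal]
      push_cast
      rfl
    rw [ht, Complex.zero_lt_real]
    have : pr i₀ ≤ ∑ i, pr i := Finset.single_le_sum (fun i _ => hprnn i) (Finset.mem_univ i₀)
    linarith
  · have h1 : ((τ : ℂ) • (1 : Matrix m m ℂ)) =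
        (U : Matrix m m ℂ) * ((τ : ℂ) • 1) * star (U : Matrix m m ℂ) := by
      rw [Matrix.mul_smul, Matrix.mul_one, Matrix.smul_mul,
        Matrix.mem_unitaryGroup_iff.mp U.2]
    have h2 : A - (τ : ℂ) • 1 = (U : Matrix m m ℂ) *
        (Matrix.diagonal (fun i => ((lam i - τ : ℝ) : ℂ))) * star (U : Matrix m m ℂ) := by
      rw [hspec, h1, ← Matrix.sub_mul, ← Matrix.mul_sub]
      congr 2
      ext i j
      by_cases h : i = j
      · subst h; simp [Matrix.diagonal_apply, Matrix.one_apply]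
      · simp [Matrix.diagonal_apply, Matrix.one_apply, h]
    rw [h2, Matrix.star_eq_conjTranspose]
    exact (Matrix.PosSemidef.diagonal fun i =>
      Complex.zero_le_real.mpr (by have := hmin i (Finset.mem_univ i); linarith)
      ).mul_mul_conjTranspose_same _
  · intro htrA hAnz
    by_contra hc
    push_neg at hc
    have hsum : ((∑ i, lam i : ℝ) : ℂ) = 0 := by
      have : Matrix.trace A = ((∑ i, lam i : ℝ) : ℂ) := by
        rw [hspec, trace_unitary_conj, Matrix.trace_diagonal]
        push_cast
        rfl
      rw [← this, htrA]
    have hsum' : (∑ i, lam i) = 0 := by exact_mod_cast hsum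
    have hall : ∀ i ∈ (Finset.univ : Finset m), lam i = 0 := by
      refine (Finset.sum_eq_zero_iff_of_nonneg fun i _ => ?_).mp hsum'
      exact le_trans hc (hmin i (Finset.mem_univ i))
    apply hAnz
    rw [hspec]
    have : (Matrix.diagonal fun i => ((lam i : ℝ) : ℂ)) = 0 := by
      ext i j
      by_cases h : i = j
      · subst h; simp [Matrix.diagonal_apply, hall i (Finset.mem_univ i)]
      · simp [Matrix.diagonal_apply, h]
    rw [this, Matrix.mul_zero, Matrix.zero_mul]

end Helpers

set_option maxHeartbeats 1000000

/-- Theorem for 1-walk regular graphs (condition (B)): if G is 1-walk regular with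
adjacency matrix A, and M, N are nonzero PSD matrices with M ∘ A ≤ 0 entrywise,
N ∘ (J - I - A) = 0 and N ∘ A ≥ 0 entrywise, then
n ≥ (tr JM)(tr JN)/((tr M)(tr N)). -/
theorem one_walk_regular_ratio_bound_B {n : ℕ}
    (G : SimpleGraph (Fin n)) [DecidableRel G.Adj]
    (hwalk : ∀ k : ℕ, 0 < k → ∃ a b : ℂ,
      Matrix.hadamard ((G.adjMatrix ℂ) ^ k) 1 = a • (1 : Matrix (Fin n) (Fin n) ℂ) ∧
      Matrix.hadamard ((G.adjMatrix ℂ) ^ k) (G.adjMatrix ℂ) = b • G.adjMatrix ℂ)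
    (M N : Matrix (Fin n) (Fin n) ℂ)
    (hM : M.PosSemidef) (hN : N.PosSemidef)
    (hMnz : M ≠ 0) (hNnz : N ≠ 0)
    (hMA : ∀ i j, Matrix.hadamard M (G.adjMatrix ℂ) i j ≤ 0)
    (hNA : Matrix.hadamard N ((Matrix.of fun _ _ => (1 : ℂ)) - 1 - G.adjMatrix ℂ) = 0)
    (hNA' : ∀ i j, 0 ≤ Matrix.hadamard N (G.adjMatrix ℂ) i j) :
    Matrix.trace ((Matrix.of fun _ _ => (1 : ℂ)) * M) *
        Matrix.trace ((Matrix.of fun _ _ => (1 : ℂ)) * N) /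
      (Matrix.trace M * Matrix.trace N) ≤ (n : ℂ) := by
  classical
  set A : Matrix (Fin n) (Fin n) ℂ := G.adjMatrix ℂ with hAdef
  set J : Matrix (Fin n) (Fin n) ℂ := Matrix.of fun _ _ => (1 : ℂ) with hJdef
  -- trivial case n = 0
  rcases Nat.eq_zero_or_pos n with hn0 | hn
  · exfalso; apply hMnz; subst hn0; ext i j; exact i.elim0
  have hne : Nonempty (Fin n) := ⟨⟨0, hn⟩⟩
  have hnR : (0:ℝ) < (n:ℝ) := by exact_mod_cast hn
  have hnC : ((n:ℂ)) ≠ 0 := by exact_mod_cast hn.ne'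
  -- basic facts about A
  have hAsym : ∀ i j, A i j = A j i := by
    intro i j; simp [hAdef, SimpleGraph.adjMatrix_apply, G.adj_comm]
  have hAdiag : ∀ i, A i i = 0 := by intro i; simp [hAdef]
  have hA01 : ∀ i j, A i j = 0 ∨ A i j = 1 := by
    intro i j
    by_cases h : G.Adj i j
    · right; simp [hAdef, SimpleGraph.adjMatrix_apply, h]
    · left; simp [hAdef, SimpleGraph.adjMatrix_apply, h]
  have hAH : A.IsHermitian := by
    show Aᴴ = A
    ext i j
    rw [Matrix.conjTranspose_apply, hAsym i j]
    rcases hA01 j i with h | h <;> rw [h] <;> simp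
  -- J is PSD
  have hJH : Jᴴ = J := by
    ext i j; simp [hJdef, Matrix.conjTranspose_apply]
  have hJpsd : J.PosSemidef := by
    refine Matrix.PosSemidef.of_dotProduct_mulVec_nonneg hJH fun x => ?_
    have hcalc : dotProduct (star x) (J *ᵥ x) = star (∑ j, x j) * (∑ j, x j) := by
      simp only [dotProduct, Matrix.mulVec, hJdef, Matrix.of_apply, Pi.star_apply,
        one_mul]
      rw [← Finset.sum_mul, ← star_sum]
    rw [hcalc]
    exact star_mul_self_nonneg _
  have hJJ : J * J = (n:ℂ) • J := by
    ext i j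
    simp [hJdef, Matrix.mul_apply, Finset.sum_const, Finset.card_univ]
  -- trace quantities
  have htM : 0 < Matrix.trace M := psd_trace_pos hM hMnz
  have htN : 0 < Matrix.trace N := psd_trace_pos hN hNnz
  have hsM : 0 ≤ Matrix.trace (J * M) := psd_trace_mul_nonneg hJpsd hM
  have hsN : 0 ≤ Matrix.trace (J * N) := psd_trace_mul_nonneg hJpsd hN
  have toReal : ∀ z : ℂ, z.im = 0 → z = ((z.re : ℝ) : ℂ) := by
    intro z h; exact Complex.ext (by simp) (by simp [h])
  set a : ℝ := (Matrix.trace (J * M)).re with hadef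
  set b : ℝ := (Matrix.trace (J * N)).re with hbdef
  set c : ℝ := (Matrix.trace M).re with hcdef
  set t : ℝ := (Matrix.trace N).re with htdef
  have hca : Matrix.trace (J * M) = ((a:ℝ):ℂ) := toReal _ ((Complex.le_def.mp hsM).2.symm)
  have hcb : Matrix.trace (J * N) = ((b:ℝ):ℂ) := toReal _ ((Complex.le_def.mp hsN).2.symm)
  have hcc : Matrix.trace M = ((c:ℝ):ℂ) := toReal _ ((Complex.lt_def.mp htM).2.symm)
  have hct : Matrix.trace N = ((t:ℝ):ℂ) := toReal _ ((Complex.lt_def.mp htN).2.symm)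
  have ha0 : 0 ≤ a := (Complex.le_def.mp hsM).1
  have hb0 : 0 ≤ b := (Complex.le_def.mp hsN).1
  have hc0 : 0 < c := (Complex.lt_def.mp htM).1
  have ht0 : 0 < t := (Complex.lt_def.mp htN).1
  -- trace (A * M) ≤ 0
  have heM : Matrix.trace (A * M) ≤ 0 := by
    rw [trace_mul_apply']
    refine Finset.sum_nonpos fun i _ => Finset.sum_nonpos fun j _ => ?_
    have h := hMA j i
    rw [Matrix.hadamard_apply] at h
    calc A i j * M j i = M j i * A j i := by rw [mul_comm, hAsym]
      _ ≤ 0 := h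
  have heN : 0 ≤ Matrix.trace (A * N) := by
    rw [trace_mul_apply']
    refine Finset.sum_nonneg fun i _ => Finset.sum_nonneg fun j _ => ?_
    have h := hNA' j i
    rw [Matrix.hadamard_apply] at h
    calc (0:ℂ) ≤ N j i * A j i := h
      _ = A i j * N j i := by rw [mul_comm, hAsym]
  set f : ℝ := (Matrix.trace (A * M)).re with hfdef
  set e : ℝ := (Matrix.trace (A * N)).re with hedef
  have hcf : Matrix.trace (A * M) = ((f:ℝ):ℂ) := toReal _ ((Complex.le_def.mp heM).2)
  have hce : Matrix.trace (A * N) = ((e:ℝ):ℂ) := toReal _ ((Complex.le_def.mp heN).2.symm)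
  have hf0 : f ≤ 0 := (Complex.le_def.mp heM).1
  have he0 : 0 ≤ e := (Complex.le_def.mp heN).1
  -- support of N
  have hNsupp : ∀ i j, i ≠ j → A i j = 0 → N i j = 0 := by
    intro i j hij hAij
    have h := congrFun (congrFun hNA i) j
    rw [Matrix.hadamard_apply] at h
    have hJ1 : J i j = 1 := rfl
    simp only [Matrix.sub_apply, hJ1, Matrix.one_apply_ne hij, hAij] at h
    simpa using h
  -- splitting of trace (J * N)
  have hsplitN : Matrix.trace (J * N) = Matrix.trace N + Matrix.trace (A * N) := by
    have hpt : ∀ i j, J i j * N j i =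
        (1 : Matrix (Fin n) (Fin n) ℂ) i j * N j i + A i j * N j i := by
      intro i j
      by_cases hij : i = j
      · subst hij; simp [hJdef, Matrix.one_apply, hAdiag]
      · rcases hA01 i j with h | h
        · have hN0 : N j i = 0 := hNsupp j i (Ne.symm hij) (by rw [hAsym j i]; exact h)
          simp [hJdef, Matrix.one_apply_ne hij, h, hN0]
        · simp [hJdef, Matrix.one_apply_ne hij, h]
    have hsum : ∑ i, ∑ j, J i j * N j i =
        ∑ i, ∑ j, ((1 : Matrix (Fin n) (Fin n) ℂ) i j * N j i + A i j * N j i) :=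
      Finset.sum_congr rfl fun i _ => Finset.sum_congr rfl fun j _ => hpt i j
    rw [trace_mul_apply', hsum]
    simp only [Finset.sum_add_distrib]
    rw [← trace_mul_apply', ← trace_mul_apply', Matrix.one_mul]
  have hbte : b = t + e := by
    have hx := hsplitN
    rw [hcb, hct, hce] at hx
    exact_mod_cast hx
  -- reduce goal to a real inequality
  have hgoal : a * b ≤ (n:ℝ) * (c * t) → Matrix.trace (J * M) * Matrix.trace (J * N) /
      (Matrix.trace M * Matrix.trace N) ≤ (n : ℂ) := by
    intro hreal
    rw [hca, hcb, hcc, hct]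
    have h1 : ((a:ℝ):ℂ) * ((b:ℝ):ℂ) / (((c:ℝ):ℂ) * ((t:ℝ):ℂ)) = (((a*b/(c*t) : ℝ)):ℂ) := by
      push_cast; ring
    have h2 : ((n:ℕ):ℂ) = (((n:ℝ)):ℂ) := by push_cast; rfl
    rw [h1, h2, Complex.real_le_real]
    rw [div_le_iff₀ (by positivity)]
    linarith [hreal]
  apply hgoal
  by_cases hA0 : A = 0
  · -- the graph has no edges
    have he00 : e = 0 := by
      have : Matrix.trace (A * N) = 0 := by rw [hA0, Matrix.zero_mul, Matrix.trace_zero]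
      rw [hce] at this; exact_mod_cast this
    -- use the PSD matrix (n•1 - J)ᴴ(n•1 - J)
    set R : Matrix (Fin n) (Fin n) ℂ := (n:ℂ) • 1 - J with hRdef
    have hRH : Rᴴ = R := by
      rw [hRdef]
      rw [Matrix.conjTranspose_sub, Matrix.conjTranspose_smul, Matrix.conjTranspose_one, hJH]
      congr 1
      simp
    have hRR : R * R = (n:ℂ) • R := by
      rw [hRdef]
      simp only [Matrix.sub_mul, Matrix.mul_sub, Matrix.smul_mul, Matrix.mul_smul,
        Matrix.mul_one, Matrix.one_mul, hJJ, smul_smul, smul_sub]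
      module
    have hpair : 0 ≤ Matrix.trace ((Rᴴ * R) * M) :=
      psd_trace_mul_nonneg (Matrix.posSemidef_conjTranspose_mul_self R) hM
    have hcomp : Matrix.trace ((Rᴴ * R) * M) =
        (n:ℂ) * ((n:ℂ) * Matrix.trace M - Matrix.trace (J * M)) := by
      rw [hRH, hRR]
      rw [Matrix.smul_mul, Matrix.trace_smul, hRdef, Matrix.sub_mul, Matrix.smul_mul,
        Matrix.one_mul, Matrix.trace_sub, Matrix.trace_smul]
      simp [smul_eq_mul]
    rw [hcomp, hcc, hca] at hpair
    have hpairR : 0 ≤ (n:ℝ) * ((n:ℝ) * c - a) := by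
      have : ((((n:ℝ) * ((n:ℝ) * c - a)):ℝ):ℂ) = (n:ℂ) * ((n:ℂ) * ((c:ℝ):ℂ) - ((a:ℝ):ℂ)) := by
        push_cast; ring
      rw [← Complex.zero_le_real, this]
      exact hpair
    have han : a ≤ (n:ℝ) * c := by nlinarith
    nlinarith [hbte, he00, ha0, hb0, hc0, ht0]
  · -- main case: the graph has at least one edge
    -- degree
    obtain ⟨a2, b2, h2I, h2A⟩ := hwalk 2 (by norm_num)
    have hdeg : ∀ i, ∑ j, A i j = a2 := by
      intro i
      have h1 := congrFun (congrFun h2I i) i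
      rw [Matrix.hadamard_apply] at h1
      simp only [Matrix.one_apply_eq, mul_one, Matrix.smul_apply, smul_eq_mul] at h1
      have h2 : (A^2) i i = ∑ j, A i j * A j i := by rw [pow_two, Matrix.mul_apply]
      have h3 : ∀ j, A i j * A j i = A i j := by
        intro j
        rw [← hAsym i j]
        rcases hA01 i j with h | h <;> rw [h] <;> ring
      rw [h2] at h1
      rw [← h1]
      exact (Finset.sum_congr rfl fun j _ => (h3 j).symm)
    have hdegcast : ∀ i : Fin n, ((G.degree i : ℕ) : ℂ) = a2 := by
      intro i
      rw [← hdeg i]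
      rw [show ∑ j, A i j = ∑ j, (if G.Adj i j then (1:ℂ) else 0) from
        Finset.sum_congr rfl fun j _ => by simp [hAdef, SimpleGraph.adjMatrix_apply]]
      rw [Finset.sum_boole]
      congr 1
      rw [SimpleGraph.degree]
      congr 1
      ext j
      simp
    -- a vertex with an edge
    have hAne : ∃ i j, A i j ≠ 0 := by
      by_contra hcon
      push_neg at hcon
      exact hA0 (by ext i j; simpa using hcon i j)
    obtain ⟨i1, j1, hij1⟩ := hAne
    have hadj1 : G.Adj i1 j1 := by
      by_contra hcon
      exact hij1 (by simp [hAdef, SimpleGraph.adjMatrix_apply, hcon])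
    set dd : ℕ := G.degree i1 with hdddef
    have hddpos : 0 < dd := (G.degree_pos_iff_exists_adj i1).mpr ⟨j1, hadj1⟩
    have hddR : (0:ℝ) < (dd:ℝ) := by exact_mod_cast hddpos
    have ha2 : a2 = ((dd:ℕ):ℂ) := (hdegcast i1).symm
    have hrow : ∀ i, ∑ j, A i j = ((dd:ℕ):ℂ) := fun i => (hdeg i).trans ha2
    have hAJ : A * J = ((dd:ℕ):ℂ) • J := by
      ext i j
      have h1 : (A * J) i j = ∑ k, A i k := by
        rw [Matrix.mul_apply]
        exact Finset.sum_congr rfl fun k _ => by rw [show J k j = 1 from rfl, mul_one]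
      rw [h1, hrow i, Matrix.smul_apply, show J i j = 1 from rfl, smul_eq_mul, mul_one]
    have hJA : J * A = ((dd:ℕ):ℂ) • J := by
      ext i j
      have h1 : (J * A) i j = ∑ k, A j k := by
        rw [Matrix.mul_apply]
        exact Finset.sum_congr rfl fun k _ => by
          rw [show J i k = 1 from rfl, one_mul, hAsym k j]
      rw [h1, hrow j, Matrix.smul_apply, show J i j = 1 from rfl, smul_eq_mul, mul_one]
    -- spectral data
    obtain ⟨τ, F, p, hFp, hFpsd, hAF, hFtr, hAtau, hτneg'⟩ := exists_min_eigen_proj hAH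
    have htrA : Matrix.trace A = 0 := by
      rw [Matrix.trace]
      simp only [Matrix.diag]
      rw [Finset.sum_congr rfl fun i _ => hAdiag i]
      simp
    have hτneg : τ < 0 := hτneg' htrA hA0
    -- Schur-product structure of polynomials in A
    have hSchur : ∀ q : ℂ[X], ∃ u v : ℂ,
        Matrix.hadamard (Polynomial.aeval A q) 1 = u • 1 ∧
        Matrix.hadamard (Polynomial.aeval A q) A = v • A := by
      intro q
      induction q using Polynomial.induction_on' with
      | add r s hr hs =>
        obtain ⟨u1, v1, h1, h2⟩ := hr
        obtain ⟨u2, v2, h3, h4⟩ := hs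
        exact ⟨u1 + u2, v1 + v2,
          by rw [map_add, Matrix.add_hadamard, h1, h3, add_smul],
          by rw [map_add, Matrix.add_hadamard, h2, h4, add_smul]⟩
      | monomial k cc =>
        have haev : Polynomial.aeval A (Polynomial.monomial k cc) = cc • (A ^ k) := by
          rw [Polynomial.aeval_monomial, Algebra.smul_def]
        rcases Nat.eq_zero_or_pos k with hk | hk
        · subst hk
          refine ⟨cc, 0, ?_, ?_⟩
          · rw [haev, pow_zero, Matrix.smul_hadamard]
            congr 1
            ext i j
            by_cases h : i = j <;> simp [Matrix.hadamard_apply, Matrix.one_apply, h]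
          · rw [haev, pow_zero, Matrix.smul_hadamard, zero_smul]
            have h1A : Matrix.hadamard (1 : Matrix (Fin n) (Fin n) ℂ) A = 0 := by
              ext i j
              by_cases h : i = j
              · subst h; simp [Matrix.hadamard_apply, hAdiag]
              · simp [Matrix.hadamard_apply, Matrix.one_apply_ne h]
            rw [h1A, smul_zero]
        · obtain ⟨ak, bk, h1, h2⟩ := hwalk k hk
          exact ⟨cc * ak, cc * bk,
            by rw [haev, Matrix.smul_hadamard, h1, smul_smul],
            by rw [haev, Matrix.smul_hadamard, h2, smul_smul]⟩
    obtain ⟨α, β, hα, hβ⟩ := by rw [hFp] at *; exact hSchur p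
    rw [← hFp] at hα hβ
    have hFdiag : ∀ i, F i i = α := by
      intro i
      have h := congrFun (congrFun hα i) i
      simpa [Matrix.hadamard_apply, Matrix.one_apply] using h
    have hFedge : ∀ i j, F i j * A i j = β * A i j := by
      intro i j
      have h := congrFun (congrFun hβ i) j
      simpa [Matrix.hadamard_apply] using h
    have htrF : Matrix.trace F = (n:ℂ) * α := by
      rw [Matrix.trace]
      simp only [Matrix.diag]
      rw [Finset.sum_congr rfl fun i _ => hFdiag i]
      simp [Finset.card_univ, mul_comm]
    -- α is a positive real
    have hαpos : 0 < (n:ℂ) * α := htrF ▸ hFtr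
    set αr : ℝ := α.re with hαrdef
    have hαim : α.im = 0 := by
      have h := (Complex.lt_def.mp hαpos).2
      simp only [Complex.mul_im, Complex.natCast_re, Complex.natCast_im, Complex.zero_im] at h
      have h2 : (n:ℝ) * α.im = 0 := by linarith
      rcases mul_eq_zero.mp h2 with h' | h'
      · exact absurd h' (ne_of_gt hnR)
      · exact h' 
    have hαre : 0 < αr := by
      have h := (Complex.lt_def.mp hαpos).1
      simp only [Complex.mul_re, Complex.natCast_re, Complex.natCast_im, Complex.zero_re,
        hαim] at h
      nlinarith
    have hαcast : α = ((αr:ℝ):ℂ) := toReal _ hαim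
    -- the relation dd * β = τ * α
    have htrAF1 : Matrix.trace (A * F) = (τ:ℂ) * ((n:ℂ) * α) := by
      rw [hAF, Matrix.trace_smul, htrF, smul_eq_mul]
    have htrAF2 : Matrix.trace (A * F) = β * ((n:ℂ) * ((dd:ℕ):ℂ)) := by
      rw [trace_mul_apply']
      have hpt : ∀ i j, A i j * F j i = β * A i j := by
        intro i j
        have h := hFedge j i
        rw [hAsym j i] at h
        rw [mul_comm]
        exact h
      rw [Finset.sum_congr rfl fun i _ => Finset.sum_congr rfl fun j _ => hpt i j]
      have hstep : ∀ i : Fin n, ∑ j, β * A i j = β * ((dd:ℕ):ℂ) := by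
        intro i
        rw [← Finset.mul_sum, hrow i]
      rw [Finset.sum_congr rfl fun i (_ : i ∈ Finset.univ) => hstep i]
      rw [Finset.sum_const, Finset.card_univ, Fintype.card_fin, nsmul_eq_mul]
      ring
    have hβdd : β * ((dd:ℕ):ℂ) = (τ:ℂ) * α := by
      have h := htrAF2.symm.trans htrAF1
      have h2 : (n:ℂ) * (β * ((dd:ℕ):ℂ)) = (n:ℂ) * ((τ:ℂ) * α) := by linear_combination h
      exact mul_left_cancel₀ hnC h2
    -- pairing F with N
    have hFN : 0 ≤ Matrix.trace (F * N) := psd_trace_mul_nonneg hFpsd hN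
    have htrFN : Matrix.trace (F * N) =
        α * Matrix.trace N + β * Matrix.trace (A * N) := by
      rw [trace_mul_apply']
      have hpt : ∀ i j, F i j * N j i =
          α * ((1 : Matrix (Fin n) (Fin n) ℂ) i j * N j i) + β * (A i j * N j i) := by
        intro i j
        by_cases hij : i = j
        · subst hij
          simp [Matrix.one_apply_eq, hAdiag, hFdiag]
        · rcases hA01 i j with h | h
          · have hN0 : N j i = 0 := hNsupp j i (Ne.symm hij) (by rw [hAsym j i]; exact h)
            simp [Matrix.one_apply_ne hij, h, hN0]
          · have hFij : F i j = β := by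
              have := hFedge i j
              rwa [h, mul_one, mul_one] at this
            simp [Matrix.one_apply_ne hij, h, hFij]
      rw [Finset.sum_congr rfl fun i _ => Finset.sum_congr rfl fun j _ => hpt i j]
      simp only [Finset.sum_add_distrib, ← Finset.mul_sum]
      rw [← trace_mul_apply', ← trace_mul_apply', Matrix.one_mul]
    -- the PSD pairing with Q (A - τ) Q
    set Q : Matrix (Fin n) (Fin n) ℂ := (n:ℂ) • 1 - J with hQdef
    have hQH : Qᴴ = Q := by
      rw [hQdef, Matrix.conjTranspose_sub, Matrix.conjTranspose_smul, Matrix.conjTranspose_one,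
        hJH]
      congr 1
      simp
    have hexp : Q * (A - (τ:ℂ) • 1) * Q =
        ((n:ℂ)^2) • A - ((n:ℂ)^2 * (τ:ℂ)) • (1 : Matrix (Fin n) (Fin n) ℂ)
          - ((n:ℂ) * (((dd:ℕ):ℂ) - (τ:ℂ))) • J := by
      rw [hQdef]
      simp only [Matrix.sub_mul, Matrix.mul_sub, Matrix.smul_mul, Matrix.mul_smul,
        Matrix.mul_one, Matrix.one_mul, hAJ, hJA, hJJ, smul_smul, smul_sub]
      module
    have hS1psd : (Q * (A - (τ:ℂ) • 1) * Q).PosSemidef := by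
      have h := hAtau.conjTranspose_mul_mul_same Q
      rwa [hQH] at h
    have hpairM : 0 ≤ Matrix.trace ((Q * (A - (τ:ℂ) • 1) * Q) * M) :=
      psd_trace_mul_nonneg hS1psd hM
    have hcompM : Matrix.trace ((Q * (A - (τ:ℂ) • 1) * Q) * M) =
        ((n:ℂ)^2) * Matrix.trace (A * M) - ((n:ℂ)^2 * (τ:ℂ)) * Matrix.trace M
          - ((n:ℂ) * (((dd:ℕ):ℂ) - (τ:ℂ))) * Matrix.trace (J * M) := by
      rw [hexp]
      rw [Matrix.sub_mul, Matrix.sub_mul, Matrix.smul_mul, Matrix.smul_mul, Matrix.smul_mul,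
        Matrix.trace_sub, Matrix.trace_sub, Matrix.trace_smul, Matrix.trace_smul,
        Matrix.trace_smul, Matrix.one_mul]
      simp [smul_eq_mul]
    -- convert the two key inequalities to the reals
    have hI1 : 0 ≤ (n:ℝ)^2 * f - (n:ℝ)^2 * τ * c - (n:ℝ) * ((dd:ℝ) - τ) * a := by
      rw [← Complex.zero_le_real]
      have : ((((n:ℝ)^2 * f - (n:ℝ)^2 * τ * c - (n:ℝ) * ((dd:ℝ) - τ) * a : ℝ)):ℂ)
          = ((n:ℂ)^2) * ((f:ℝ):ℂ) - ((n:ℂ)^2 * (τ:ℂ)) * ((c:ℝ):ℂ)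
            - ((n:ℂ) * (((dd:ℕ):ℂ) - (τ:ℂ))) * ((a:ℝ):ℂ) := by
        push_cast; ring
      rw [this, ← hcf, ← hcc, ← hca, ← hcompM]
      exact hpairM
    set g : ℝ := (Matrix.trace (F * N)).re with hgdef
    have hcg : Matrix.trace (F * N) = ((g:ℝ):ℂ) := toReal _ ((Complex.le_def.mp hFN).2.symm)
    have hg0 : 0 ≤ g := (Complex.le_def.mp hFN).1
    have hI2 : (dd:ℝ) * g = αr * t * (dd:ℝ) + τ * αr * e := by
      have hcx : ((dd:ℕ):ℂ) * ((g:ℝ):ℂ) = ((αr:ℝ):ℂ) * ((t:ℝ):ℂ) * ((dd:ℕ):ℂ)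
          + ((τ:ℝ):ℂ) * ((αr:ℝ):ℂ) * ((e:ℝ):ℂ) := by
        calc ((dd:ℕ):ℂ) * ((g:ℝ):ℂ) = ((dd:ℕ):ℂ) * (α * Matrix.trace N
              + β * Matrix.trace (A * N)) := by rw [← hcg, htrFN]
          _ = α * Matrix.trace N * ((dd:ℕ):ℂ) + (β * ((dd:ℕ):ℂ)) * Matrix.trace (A * N) := by
              ring
          _ = ((αr:ℝ):ℂ) * ((t:ℝ):ℂ) * ((dd:ℕ):ℂ) + ((τ:ℝ):ℂ) * ((αr:ℝ):ℂ) * ((e:ℝ):ℂ) := by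
              rw [hβdd, hαcast, hct, hce]; try ring
      exact_mod_cast hcx
    -- final real computation
    have k1 : (0:ℝ) < -τ := by linarith
    have k2 : (0:ℝ) < (dd:ℝ) - τ := by linarith
    have hq1 : 0 ≤ (dd:ℝ) * t + τ * e := by
      have h := hI2
      nlinarith [mul_nonneg hddR.le hg0]
    have e1 : ((dd:ℝ) - τ) * a ≤ (n:ℝ) * (-τ) * c := by
      have hmul : (n:ℝ) * (((dd:ℝ) - τ) * a) ≤ (n:ℝ) * ((n:ℝ) * (-τ) * c) := by
        nlinarith [hI1, hf0, hnR]
      exact le_of_mul_le_mul_left hmul hnR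
    have e2 : (-τ) * b ≤ ((dd:ℝ) - τ) * t := by
      rw [hbte]; nlinarith [hq1]
    have e3 : (((dd:ℝ) - τ) * a) * ((-τ) * b) ≤ ((n:ℝ) * (-τ) * c) * (((dd:ℝ) - τ) * t) := by
      apply mul_le_mul e1 e2 (by positivity) (by positivity)
    have e4 : (((dd:ℝ) - τ) * (-τ)) * (a * b) ≤ (((dd:ℝ) - τ) * (-τ)) * ((n:ℝ) * (c * t)) := by
      nlinarith [e3]
    exact le_of_mul_le_mul_left e4 (by positivity)
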